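/- Let m be a positive integer, τ ∈ ℍ, and z ∈ ℂ with 0 < Im z < Im τ; set y := e^{2πiz}. Then Σ_{k∈ℤ} y^{2km} q^{mk²} / (1 − y q^k) = Σ_{k≥0, l≥0} y^{2km+l} q^{mk² + kl} − Σ_{k<0, l<0} y^{2km+l} q^{mk² + kl}, where all three series converge absolutely (k, l range over ℤ subject to the stated inequalities). -/

import Mathlib

open Complex Real

/-- `qp τ c` is `q^c = e^{2πicτ}`. -/
noncomputable def qp (τ : ℂ) (c : ℝ) : ℂ := Complex.exp (2 * Real.pi * Complex.I * c * τ)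

lemma qp_ne_zero (τ : ℂ) (c : ℝ) : qp τ c ≠ 0 := Complex.exp_ne_zero _

lemma qp_zpow (τ : ℂ) (c : ℝ) (n : ℤ) : (qp τ c) ^ n = qp τ (n * c) := by
  rw [qp, qp, ← Complex.exp_int_mul]
  congr 1
  push_cast
  ring

lemma norm_qp (τ : ℂ) (c : ℝ) : ‖qp τ c‖ = Real.exp (-(2 * Real.pi * c * τ.im)) := by
  rw [qp, Complex.norm_exp]
  congr 1
  simp [Complex.mul_re, Complex.mul_im]

set_option maxHeartbeats 1600000 in
/-- Geometric expansion of `f₁`: for `0 < Im z < Im τ`,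
`Σ_{k∈ℤ} y^{2km} q^{mk²}/(1 - y q^k) = Σ_{k≥0,l≥0} y^{2km+l} q^{mk²+kl}
  - Σ_{k<0,l<0} y^{2km+l} q^{mk²+kl}`. -/
theorem f1_cone_expansion (m : ℕ) (hm : 0 < m) (τ z : ℂ) (hτ : 0 < τ.im)
    (hz0 : 0 < z.im) (hz1 : z.im < τ.im)
    (y : ℂ) (hy : y = Complex.exp (2 * Real.pi * Complex.I * z)) :
    Summable (fun k : ℤ =>
      ‖y ^ (2 * k * (m : ℤ)) * qp τ ((m : ℝ) * (k : ℝ) ^ 2) / (1 - y * qp τ (k : ℝ))‖) ∧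
    Summable (fun n : ℤ × ℤ => if 0 ≤ n.1 ∧ 0 ≤ n.2 then
      ‖y ^ (2 * n.1 * (m : ℤ) + n.2) * qp τ ((m : ℝ) * (n.1 : ℝ) ^ 2 + (n.1 : ℝ) * (n.2 : ℝ))‖
      else 0) ∧
    Summable (fun n : ℤ × ℤ => if n.1 < 0 ∧ n.2 < 0 then
      ‖y ^ (2 * n.1 * (m : ℤ) + n.2) * qp τ ((m : ℝ) * (n.1 : ℝ) ^ 2 + (n.1 : ℝ) * (n.2 : ℝ))‖
      else 0) ∧
    (∑' k : ℤ, y ^ (2 * k * (m : ℤ)) * qp τ ((m : ℝ) * (k : ℝ) ^ 2) / (1 - y * qp τ (k : ℝ))) =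
      (∑' n : ℤ × ℤ, if 0 ≤ n.1 ∧ 0 ≤ n.2 then
        y ^ (2 * n.1 * (m : ℤ) + n.2) * qp τ ((m : ℝ) * (n.1 : ℝ) ^ 2 + (n.1 : ℝ) * (n.2 : ℝ))
        else 0) -
      (∑' n : ℤ × ℤ, if n.1 < 0 ∧ n.2 < 0 then
        y ^ (2 * n.1 * (m : ℤ) + n.2) * qp τ ((m : ℝ) * (n.1 : ℝ) ^ 2 + (n.1 : ℝ) * (n.2 : ℝ))
        else 0) := by
  have hπ := Real.pi_pos
  set s := z.im with hsdef
  set t := τ.im with htdef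
  have hm1 : (1 : ℝ) ≤ (m : ℝ) := by exact_mod_cast hm
  have hm0 : (0 : ℝ) ≤ (m : ℝ) := le_trans zero_le_one hm1
  have hy0 : y ≠ 0 := by rw [hy]; exact Complex.exp_ne_zero _
  have hy1 : y = qp z 1 := by rw [hy, qp]; norm_num
  have ht0 : 0 < t := hτ
  -- norm of the general term
  have hnormT : ∀ k l : ℤ,
      ‖y ^ (2 * k * (m : ℤ) + l) * qp τ ((m : ℝ) * (k : ℝ) ^ 2 + (k : ℝ) * (l : ℝ))‖ =
      Real.exp (-(2 * Real.pi) *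
        ((2 * (k : ℝ) * (m : ℝ) + (l : ℝ)) * s +
          ((m : ℝ) * (k : ℝ) ^ 2 + (k : ℝ) * (l : ℝ)) * t)) := by
    intro k l
    rw [hy1, qp_zpow, norm_mul, norm_qp, norm_qp, ← Real.exp_add]
    congr 1
    push_cast
    ring
  -- factorization of the general term
  have hTfac : ∀ k l : ℤ,
      y ^ (2 * k * (m : ℤ) + l) * qp τ ((m : ℝ) * (k : ℝ) ^ 2 + (k : ℝ) * (l : ℝ)) =
      (y ^ (2 * k * (m : ℤ)) * qp τ ((m : ℝ) * (k : ℝ) ^ 2)) * (y * qp τ (k : ℝ)) ^ l := by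
    intro k l
    simp only [hy, qp, mul_zpow, ← Complex.exp_int_mul, ← Complex.exp_add]
    congr 1
    push_cast
    ring
  -- geometric ratios are < 1
  have hQ1 : Real.exp (-(2 * Real.pi * t)) < 1 := by
    rw [Real.exp_lt_one_iff]; nlinarith
  have hY1 : Real.exp (-(2 * Real.pi * s)) < 1 := by
    rw [Real.exp_lt_one_iff]; nlinarith
  have hr1 : Real.exp (-(2 * Real.pi * (t - s))) < 1 := by
    rw [Real.exp_lt_one_iff]; nlinarith
  have hρ1 : Real.exp (-(2 * Real.pi * ((m : ℝ) * t))) < 1 := by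
    rw [Real.exp_lt_one_iff]
    have h : (0:ℝ) < 2 * Real.pi * ((m : ℝ) * t) := by positivity
    linarith
  -- bound on cone 1
  have hb1 : ∀ a b : ℕ,
      ‖y ^ (2 * (a : ℤ) * (m : ℤ) + (b : ℤ)) *
        qp τ ((m : ℝ) * (((a : ℤ) : ℝ)) ^ 2 + ((a : ℤ) : ℝ) * ((b : ℤ) : ℝ))‖ ≤
      Real.exp (-(2 * Real.pi * t)) ^ a * Real.exp (-(2 * Real.pi * s)) ^ b := by
    intro a b
    rw [hnormT]
    simp only [← Real.exp_nat_mul, ← Real.exp_add, Real.exp_le_exp]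
    push_cast
    have ha : (0:ℝ) ≤ (a:ℝ) := Nat.cast_nonneg a
    have hb : (0:ℝ) ≤ (b:ℝ) := Nat.cast_nonneg b
    have haa : (0:ℝ) ≤ (a:ℝ) * ((a:ℝ) - 1) := by
      rcases Nat.eq_zero_or_pos a with h | h
      · simp [h]
      · have h1 : (1:ℝ) ≤ (a:ℝ) := by exact_mod_cast h
        nlinarith
    nlinarith [mul_nonneg (mul_nonneg hm0 ha) hz0.le,
      mul_nonneg (mul_nonneg ha hb) ht0.le,
      mul_nonneg (mul_nonneg (sub_nonneg.mpr hm1) (mul_nonneg ha ha)) ht0.le,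
      mul_nonneg haa ht0.le]
  -- bound on cone 2
  have hb2 : ∀ a b : ℕ,
      ‖y ^ (2 * (-((a : ℤ) + 1)) * (m : ℤ) + (-((b : ℤ) + 1))) *
        qp τ ((m : ℝ) * (((-((a : ℤ) + 1) : ℤ)) : ℝ) ^ 2 +
          ((-((a : ℤ) + 1) : ℤ) : ℝ) * ((-((b : ℤ) + 1) : ℤ) : ℝ))‖ ≤
      Real.exp (2 * Real.pi * ((m : ℝ) * t)) *
        (Real.exp (-(2 * Real.pi * ((m : ℝ) * t))) ^ a *
          Real.exp (-(2 * Real.pi * (t - s))) ^ b) := by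
    intro a b
    rw [hnormT]
    simp only [← Real.exp_nat_mul, ← Real.exp_add, Real.exp_le_exp]
    push_cast
    have ha : (0:ℝ) ≤ (a:ℝ) := Nat.cast_nonneg a
    have hb : (0:ℝ) ≤ (b:ℝ) := Nat.cast_nonneg b
    have haa : (0:ℝ) ≤ (a:ℝ) * ((a:ℝ) - 1) := by
      rcases Nat.eq_zero_or_pos a with h | h
      · simp [h]
      · have h1 : (1:ℝ) ≤ (a:ℝ) := by exact_mod_cast h
        nlinarith
    have key : 2 * (m:ℝ) * s * ((a:ℝ) + 1) ≤ 2 * (m:ℝ) * t * ((a:ℝ) + 1) := by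
      have h1 : (0:ℝ) ≤ 2 * (m:ℝ) * ((a:ℝ) + 1) := by positivity
      nlinarith
    nlinarith [key, mul_nonneg (mul_nonneg hm0 ht0.le) haa,
      mul_nonneg (mul_nonneg ht0.le ha) hb, mul_nonneg ht0.le ha]
  -- majorant summability
  have hsum1 : Summable (fun p : ℕ × ℕ =>
      Real.exp (-(2 * Real.pi * t)) ^ p.1 * Real.exp (-(2 * Real.pi * s)) ^ p.2) :=
    Summable.mul_of_nonneg (summable_geometric_of_lt_one (Real.exp_nonneg _) hQ1)
      (summable_geometric_of_lt_one (Real.exp_nonneg _) hY1)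
      (fun _ => pow_nonneg (Real.exp_nonneg _) _)
      (fun _ => pow_nonneg (Real.exp_nonneg _) _)
  have hsum2 : Summable (fun p : ℕ × ℕ =>
      Real.exp (2 * Real.pi * ((m : ℝ) * t)) *
        (Real.exp (-(2 * Real.pi * ((m : ℝ) * t))) ^ p.1 *
          Real.exp (-(2 * Real.pi * (t - s))) ^ p.2)) :=
    (Summable.mul_of_nonneg (summable_geometric_of_lt_one (Real.exp_nonneg _) hρ1)
      (summable_geometric_of_lt_one (Real.exp_nonneg _) hr1)
      (fun _ => pow_nonneg (Real.exp_nonneg _) _)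
      (fun _ => pow_nonneg (Real.exp_nonneg _) _)).mul_left _
  -- summability of the cone 1 indicator
  have he1 : Function.Injective (fun p : ℕ × ℕ => ((p.1 : ℤ), (p.2 : ℤ))) := by
    rintro ⟨a, b⟩ ⟨c, d⟩ h
    simp only [Prod.mk.injEq] at h ⊢
    omega
  have hg1 : Summable (fun n : ℤ × ℤ => if 0 ≤ n.1 ∧ 0 ≤ n.2 then
      ‖y ^ (2 * n.1 * (m : ℤ) + n.2) *
        qp τ ((m : ℝ) * (n.1 : ℝ) ^ 2 + (n.1 : ℝ) * (n.2 : ℝ))‖ else 0) := by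
    rw [← Function.Injective.summable_iff he1 (by
      rintro ⟨x1, x2⟩ hx
      rw [if_neg]
      rintro ⟨h1, h2⟩
      refine hx ⟨(x1.toNat, x2.toNat), ?_⟩
      simp only [Prod.mk.injEq]
      omega)]
    refine Summable.of_nonneg_of_le (fun p => ?_) (fun p => ?_) hsum1
    · simp only [Function.comp_apply]
      split <;> positivity
    · show (if 0 ≤ (p.1 : ℤ) ∧ 0 ≤ (p.2 : ℤ) then
        ‖y ^ (2 * (p.1 : ℤ) * (m : ℤ) + (p.2 : ℤ)) *
          qp τ ((m : ℝ) * (((p.1 : ℤ)) : ℝ) ^ 2 + ((p.1 : ℤ) : ℝ) * ((p.2 : ℤ) : ℝ))‖ else 0) ≤ _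
      rw [if_pos ⟨Int.natCast_nonneg p.1, Int.natCast_nonneg p.2⟩]
      exact hb1 p.1 p.2
  -- summability of the cone 2 indicator
  have he2 : Function.Injective (fun p : ℕ × ℕ => (-((p.1 : ℤ) + 1), -((p.2 : ℤ) + 1))) := by
    rintro ⟨a, b⟩ ⟨c, d⟩ h
    simp only [Prod.mk.injEq] at h ⊢
    omega
  have hg2 : Summable (fun n : ℤ × ℤ => if n.1 < 0 ∧ n.2 < 0 then
      ‖y ^ (2 * n.1 * (m : ℤ) + n.2) *
        qp τ ((m : ℝ) * (n.1 : ℝ) ^ 2 + (n.1 : ℝ) * (n.2 : ℝ))‖ else 0) := by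
    rw [← Function.Injective.summable_iff he2 (by
      rintro ⟨x1, x2⟩ hx
      rw [if_neg]
      rintro ⟨h1, h2⟩
      refine hx ⟨((-x1 - 1).toNat, (-x2 - 1).toNat), ?_⟩
      simp only [Prod.mk.injEq]
      omega)]
    refine Summable.of_nonneg_of_le (fun p => ?_) (fun p => ?_) hsum2
    · simp only [Function.comp_apply]
      split <;> positivity
    · show (if -((p.1 : ℤ) + 1) < 0 ∧ -((p.2 : ℤ) + 1) < 0 then
        ‖y ^ (2 * (-((p.1 : ℤ) + 1)) * (m : ℤ) + (-((p.2 : ℤ) + 1))) *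
          qp τ ((m : ℝ) * (((-((p.1 : ℤ) + 1) : ℤ)) : ℝ) ^ 2 +
            ((-((p.1 : ℤ) + 1) : ℤ) : ℝ) * ((-((p.2 : ℤ) + 1) : ℤ) : ℝ))‖ else 0) ≤ _
      rw [if_pos ⟨by omega, by omega⟩]
      exact hb2 p.1 p.2
  -- the combined function
  set F : ℤ × ℤ → ℂ := fun n =>
    if 0 ≤ n.1 ∧ 0 ≤ n.2 then
      y ^ (2 * n.1 * (m : ℤ) + n.2) *
        qp τ ((m : ℝ) * (n.1 : ℝ) ^ 2 + (n.1 : ℝ) * (n.2 : ℝ))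
    else if n.1 < 0 ∧ n.2 < 0 then
      -(y ^ (2 * n.1 * (m : ℤ) + n.2) *
        qp τ ((m : ℝ) * (n.1 : ℝ) ^ 2 + (n.1 : ℝ) * (n.2 : ℝ)))
    else 0 with hFdef
  have hFnorm : Summable (fun n : ℤ × ℤ => ‖F n‖) := by
    have heq : (fun n : ℤ × ℤ => ‖F n‖) = fun n =>
        (if 0 ≤ n.1 ∧ 0 ≤ n.2 then
          ‖y ^ (2 * n.1 * (m : ℤ) + n.2) *
            qp τ ((m : ℝ) * (n.1 : ℝ) ^ 2 + (n.1 : ℝ) * (n.2 : ℝ))‖ else 0) +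
        (if n.1 < 0 ∧ n.2 < 0 then
          ‖y ^ (2 * n.1 * (m : ℤ) + n.2) *
            qp τ ((m : ℝ) * (n.1 : ℝ) ^ 2 + (n.1 : ℝ) * (n.2 : ℝ))‖ else 0) := by
      funext n
      simp only [hFdef]
      by_cases h1 : 0 ≤ n.1 ∧ 0 ≤ n.2
      · rw [if_pos h1, if_pos h1, if_neg (by omega), add_zero]
      · by_cases h2 : n.1 < 0 ∧ n.2 < 0
        · rw [if_neg h1, if_pos h2, if_neg h1, if_pos h2, norm_neg, zero_add]
        · rw [if_neg h1, if_neg h2, if_neg h1, if_neg h2, norm_zero, add_zero]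
    rw [heq]
    exact hg1.add hg2
  have hFsum : Summable F := Summable.of_norm hFnorm
  -- fiberwise geometric summation
  have hfiber : ∀ k : ℤ, (∑' l : ℤ, F (k, l)) =
      y ^ (2 * k * (m : ℤ)) * qp τ ((m : ℝ) * (k : ℝ) ^ 2) / (1 - y * qp τ (k : ℝ)) := by
    intro k
    set A : ℂ := y ^ (2 * k * (m : ℤ)) * qp τ ((m : ℝ) * (k : ℝ) ^ 2) with hAdef
    set w : ℂ := y * qp τ (k : ℝ) with hwdef
    have hw0 : w ≠ 0 := mul_ne_zero hy0 (qp_ne_zero _ _)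
    have hnw : ‖w‖ = Real.exp (-(2 * Real.pi) * (s + k * t)) := by
      rw [hwdef, norm_mul, hy1, norm_qp, norm_qp, ← Real.exp_add]
      congr 1
      ring
    by_cases hk : 0 ≤ k
    · have hwlt : ‖w‖ < 1 := by
        rw [hnw, Real.exp_lt_one_iff]
        have hk0 : (0:ℝ) ≤ (k:ℝ) := by exact_mod_cast hk
        nlinarith [mul_nonneg hk0 ht0.le]
      have hFk : ∀ l : ℤ, F (k, l) = if 0 ≤ l then A * w ^ l else 0 := by
        intro l
        show (if 0 ≤ k ∧ 0 ≤ l then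
            y ^ (2 * k * (m : ℤ) + l) * qp τ ((m : ℝ) * (k : ℝ) ^ 2 + (k : ℝ) * (l : ℝ))
          else if k < 0 ∧ l < 0 then
            -(y ^ (2 * k * (m : ℤ) + l) * qp τ ((m : ℝ) * (k : ℝ) ^ 2 + (k : ℝ) * (l : ℝ)))
          else 0) = _
        by_cases hl : 0 ≤ l
        · rw [if_pos ⟨hk, hl⟩, if_pos hl, hTfac]
        · rw [if_neg (by tauto), if_neg (by omega), if_neg hl]
      calc (∑' l : ℤ, F (k, l)) = ∑' l : ℤ, (if 0 ≤ l then A * w ^ l else 0) :=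
            tsum_congr hFk
        _ = ∑' n : ℕ, (if 0 ≤ (n : ℤ) then A * w ^ (n : ℤ) else 0) :=
            (Function.Injective.tsum_eq (g := fun n : ℕ => (n : ℤ)) (fun a b hab => by have hab' : (a : ℤ) = (b : ℤ) := hab; exact_mod_cast hab') (by
              intro x hx
              simp only [Function.mem_support] at hx
              have hx0 : 0 ≤ x := by by_contra h; exact hx (if_neg h)
              exact ⟨x.toNat, Int.toNat_of_nonneg hx0⟩)).symm
        _ = ∑' n : ℕ, A * w ^ n := by
            refine tsum_congr fun n => ?_
            rw [if_pos (Int.natCast_nonneg n), zpow_natCast]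
        _ = A * (1 - w)⁻¹ := by rw [tsum_mul_left, tsum_geometric_of_norm_lt_one hwlt]
        _ = A / (1 - w) := (div_eq_mul_inv _ _).symm
    · have hk' : k < 0 := by omega
      have hwinv : ‖w⁻¹‖ < 1 := by
        rw [norm_inv, hnw, ← Real.exp_neg, Real.exp_lt_one_iff]
        have hk1 : (k:ℝ) ≤ -1 := by
          have hk2 : k ≤ -1 := by omega
          exact_mod_cast hk2
        nlinarith [mul_le_mul_of_nonneg_right hk1 ht0.le]
      have hw1 : w ≠ 1 := by
        intro h
        rw [h] at hwinv
        simp at hwinv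
      have h1w : (1 : ℂ) - w ≠ 0 := sub_ne_zero.mpr (Ne.symm hw1)
      have h1wi : (1 : ℂ) - w⁻¹ ≠ 0 := by
        intro h
        have hwi1 : w⁻¹ = 1 := by linear_combination -h
        rw [hwi1] at hwinv
        simp at hwinv
      have hFk : ∀ l : ℤ, F (k, l) = if l < 0 then -(A * w ^ l) else 0 := by
        intro l
        show (if 0 ≤ k ∧ 0 ≤ l then
            y ^ (2 * k * (m : ℤ) + l) * qp τ ((m : ℝ) * (k : ℝ) ^ 2 + (k : ℝ) * (l : ℝ))
          else if k < 0 ∧ l < 0 then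
            -(y ^ (2 * k * (m : ℤ) + l) * qp τ ((m : ℝ) * (k : ℝ) ^ 2 + (k : ℝ) * (l : ℝ)))
          else 0) = _
        by_cases hl : l < 0
        · rw [if_neg (by tauto), if_pos ⟨hk', hl⟩, if_pos hl, hTfac]
        · rw [if_neg (by tauto), if_neg (by tauto), if_neg hl]
      have hwe : ∀ n : ℕ, w ^ (-(n : ℤ) - 1) = w⁻¹ * w⁻¹ ^ n := by
        intro n
        rw [show -(n : ℤ) - 1 = -((n : ℤ) + 1) by ring, zpow_neg,
          zpow_add₀ hw0, zpow_natCast, zpow_one, mul_inv, inv_pow, mul_comm]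
      calc (∑' l : ℤ, F (k, l)) = ∑' l : ℤ, (if l < 0 then -(A * w ^ l) else 0) :=
            tsum_congr hFk
        _ = ∑' n : ℕ, (if (-(n : ℤ) - 1) < 0 then -(A * w ^ (-(n : ℤ) - 1)) else 0) :=
            (Function.Injective.tsum_eq (g := fun n : ℕ => -(n : ℤ) - 1)
              (by
                intro a b hab
                have hab' : -(a : ℤ) - 1 = -(b : ℤ) - 1 := hab
                omega)
              (by
                intro x hx
                simp only [Function.mem_support] at hx
                have hx0 : x < 0 := by by_contra h; exact hx (if_neg h)
                exact ⟨(-x - 1).toNat, show -(((-x - 1).toNat : ℤ)) - 1 = x by omega⟩)).symm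
        _ = ∑' n : ℕ, -(A * w⁻¹ * w⁻¹ ^ n) := by
            refine tsum_congr fun n => ?_
            rw [if_pos (show -(n : ℤ) - 1 < 0 by omega), hwe n, hAdef]
            ring
        _ = -(A * w⁻¹ * (1 - w⁻¹)⁻¹) := by
            rw [tsum_neg, tsum_mul_left, tsum_geometric_of_norm_lt_one hwinv]
        _ = A / (1 - w) := by
            apply mul_right_cancel₀ h1w
            rw [div_mul_cancel₀ _ h1w]
            have h3 : (1 : ℂ) - w = -w * (1 - w⁻¹) := by
              rw [neg_mul, mul_sub, mul_inv_cancel₀ hw0]; ring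
            rw [h3, show -(A * w⁻¹ * (1 - w⁻¹)⁻¹) * (-w * (1 - w⁻¹)) =
              A * (w⁻¹ * w) * ((1 - w⁻¹)⁻¹ * (1 - w⁻¹)) from by ring,
              inv_mul_cancel₀ hw0, inv_mul_cancel₀ h1wi, mul_one, mul_one]
  have hfibnorm : ∀ k : ℤ, Summable fun l : ℤ => ‖F (k, l)‖ := fun k =>
    hFnorm.prod_factor k
  have hfibsum : ∀ k : ℤ, Summable fun l : ℤ => F (k, l) := fun k =>
    hFsum.prod_factor k
  -- summability of the k-sum
  have hksum : Summable (fun k : ℤ =>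
      ‖y ^ (2 * k * (m : ℤ)) * qp τ ((m : ℝ) * (k : ℝ) ^ 2) / (1 - y * qp τ (k : ℝ))‖) := by
    refine Summable.of_nonneg_of_le (fun k => norm_nonneg _) (fun k => ?_) hFnorm.prod
    rw [← hfiber k]
    exact norm_tsum_le_tsum_norm (hfibnorm k)
  -- summability of the two cone series (complex valued)
  have hS1 : Summable (fun n : ℤ × ℤ => if 0 ≤ n.1 ∧ 0 ≤ n.2 then
      y ^ (2 * n.1 * (m : ℤ) + n.2) *
        qp τ ((m : ℝ) * (n.1 : ℝ) ^ 2 + (n.1 : ℝ) * (n.2 : ℝ)) else 0) := by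
    refine Summable.of_norm ?_
    have : (fun n : ℤ × ℤ => ‖if 0 ≤ n.1 ∧ 0 ≤ n.2 then
        y ^ (2 * n.1 * (m : ℤ) + n.2) *
          qp τ ((m : ℝ) * (n.1 : ℝ) ^ 2 + (n.1 : ℝ) * (n.2 : ℝ)) else 0‖) =
        (fun n : ℤ × ℤ => if 0 ≤ n.1 ∧ 0 ≤ n.2 then
        ‖y ^ (2 * n.1 * (m : ℤ) + n.2) *
          qp τ ((m : ℝ) * (n.1 : ℝ) ^ 2 + (n.1 : ℝ) * (n.2 : ℝ))‖ else 0) := by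
      funext n
      split <;> simp
    rw [this]
    exact hg1
  have hS2 : Summable (fun n : ℤ × ℤ => if n.1 < 0 ∧ n.2 < 0 then
      y ^ (2 * n.1 * (m : ℤ) + n.2) *
        qp τ ((m : ℝ) * (n.1 : ℝ) ^ 2 + (n.1 : ℝ) * (n.2 : ℝ)) else 0) := by
    refine Summable.of_norm ?_
    have : (fun n : ℤ × ℤ => ‖if n.1 < 0 ∧ n.2 < 0 then
        y ^ (2 * n.1 * (m : ℤ) + n.2) *
          qp τ ((m : ℝ) * (n.1 : ℝ) ^ 2 + (n.1 : ℝ) * (n.2 : ℝ)) else 0‖) =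
        (fun n : ℤ × ℤ => if n.1 < 0 ∧ n.2 < 0 then
        ‖y ^ (2 * n.1 * (m : ℤ) + n.2) *
          qp τ ((m : ℝ) * (n.1 : ℝ) ^ 2 + (n.1 : ℝ) * (n.2 : ℝ))‖ else 0) := by
      funext n
      split <;> simp
    rw [this]
    exact hg2
  refine ⟨hksum, hg1, hg2, ?_⟩
  calc (∑' k : ℤ, y ^ (2 * k * (m : ℤ)) * qp τ ((m : ℝ) * (k : ℝ) ^ 2) /
        (1 - y * qp τ (k : ℝ)))
      = ∑' k : ℤ, ∑' l : ℤ, F (k, l) := tsum_congr fun k => (hfiber k).symm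
    _ = ∑' n : ℤ × ℤ, F n := (Summable.tsum_prod' hFsum hfibsum).symm
    _ = _ := by
        rw [← Summable.tsum_sub hS1 hS2]
        refine tsum_congr fun n => ?_
        show (if 0 ≤ n.1 ∧ 0 ≤ n.2 then
            y ^ (2 * n.1 * (m : ℤ) + n.2) *
              qp τ ((m : ℝ) * (n.1 : ℝ) ^ 2 + (n.1 : ℝ) * (n.2 : ℝ))
          else if n.1 < 0 ∧ n.2 < 0 then
            -(y ^ (2 * n.1 * (m : ℤ) + n.2) *
              qp τ ((m : ℝ) * (n.1 : ℝ) ^ 2 + (n.1 : ℝ) * (n.2 : ℝ)))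
          else 0) = _
        by_cases h1 : 0 ≤ n.1 ∧ 0 ≤ n.2
        · rw [if_pos h1, if_pos h1, if_neg (by omega), sub_zero]
        · by_cases h2 : n.1 < 0 ∧ n.2 < 0
          · rw [if_neg h1, if_pos h2, if_neg h1, if_pos h2, zero_sub]
          · rw [if_neg h1, if_neg h2, if_neg h1, if_neg h2, sub_zero]
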